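/- For every integer i ≥ 0, the identity 𝒮_i^{(1)} = 𝒮_{≤i} · S_i(q−1) holds in K[t]; explicitly, Σ_{a∈A_{+,i}} a(t)·a^{−q} = (Σ_{d=0}^{i} Σ_{a∈A_{+,d}} a(t)·a^{−1}) · (Σ_{b∈A_{+,i}} b^{−(q−1)}). (Genus-zero instance of the paper's key identity, Theorem 2.5.) -/

import Mathlib

/-!
Genus-zero setting: `Fq` the finite field with `q = Fintype.card Fq` elements,
`A = Fq[θ] = Polynomial Fq`, `K = Fq(θ) = RatFunc Fq`.  `t` is a second
indeterminate: polynomials in `t` over `K` are `Polynomial (RatFunc Fq)`.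
For `a ∈ A`, `a(t)` denotes `a` with `θ` replaced by `t`.  For `d ≥ 0`,
`𝒮_d = Σ_{a ∈ A_{+,d}} a(t)·a⁻¹ ∈ K[t]`, `𝒮_{≤i} = Σ_{d=0}^{i} 𝒮_d`, the twist
`𝒮_i^{(1)} = Σ_{a ∈ A_{+,i}} a(t)·a^{-q}`, and `S_i(n) = Σ_{a ∈ A_{+,i}} a^{-n} ∈ K`.
-/

open Polynomial

/-- The monic polynomial `θ^d + Σ_i c i • θ^i` of degree `d`; as `c` ranges over
all tuples this enumerates the set `A_{+,d}` of monic polynomials of degree `d`. -/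
noncomputable def monicOf (Fq : Type) [Field Fq] (d : ℕ) (c : Fin d → Fq) : Polynomial Fq :=
  Polynomial.X ^ d + ∑ i : Fin d, Polynomial.C (c i) * Polynomial.X ^ (i : ℕ)

/-- The power sum `S_d(n) = Σ_{a ∈ A_{+,d}} a^{-n} ∈ K`. -/
noncomputable def powerSum (Fq : Type) [Field Fq] [Fintype Fq] (d n : ℕ) : RatFunc Fq :=
  ∑ c : Fin d → Fq, (algebraMap (Polynomial Fq) (RatFunc Fq) (monicOf Fq d c))⁻¹ ^ n

/-- `𝒮_d = Σ_{a ∈ A_{+,d}} a(t)·a⁻¹ ∈ K[t]`. -/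
noncomputable def scriptS (Fq : Type) [Field Fq] [Fintype Fq] (d : ℕ) :
    Polynomial (RatFunc Fq) :=
  ∑ c : Fin d → Fq,
    Polynomial.C ((algebraMap (Polynomial Fq) (RatFunc Fq) (monicOf Fq d c))⁻¹) *
      (monicOf Fq d c).map (algebraMap Fq (RatFunc Fq))

section
open Finset
variable {Fq : Type} [Field Fq] [Fintype Fq]
local notation "q" => Fintype.card Fq

lemma st4.geom (k : ℕ) : ∑ j ∈ Finset.range k, (q-1) * q^j = q^k - 1 := by
  have hq : 0 < q := Fintype.card_pos
  induction k with
  | zero => simp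
  | succ k ih =>
    rw [Finset.sum_range_succ, ih]
    have h1 : 1 ≤ q^k := Nat.one_le_pow _ _ hq
    have h3 : q^(k+1) = q * q^k := by ring
    have h2 : q^k ≤ q * q^k := Nat.le_mul_of_pos_left _ hq
    have h4 : (q-1) * q^k = q * q^k - q^k := by rw [Nat.sub_mul, one_mul]
    omega

lemma st4.sum_pow_q {β : Type} (s : Finset β) (f : β → Polynomial Fq) (m : ℕ) :
    (∑ b ∈ s, f b) ^ q ^ m = ∑ b ∈ s, f b ^ q ^ m := by
  obtain ⟨n, hp, hcard⟩ := FiniteField.card Fq (ringChar Fq)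
  haveI : Fact (Nat.Prime (ringChar Fq)) := ⟨hp⟩
  haveI : ExpChar (Polynomial Fq) (ringChar Fq) := ExpChar.prime hp
  rw [hcard, ← pow_mul]
  exact sum_pow_char_pow (p := ringChar Fq) (n := ↑n * m) s f

lemma st4.add_pow_q (a b : Polynomial Fq) (m : ℕ) :
    (a + b) ^ q ^ m = a ^ q ^ m + b ^ q ^ m := by
  obtain ⟨n, hp, hcard⟩ := FiniteField.card Fq (ringChar Fq)
  haveI : Fact (Nat.Prime (ringChar Fq)) := ⟨hp⟩
  haveI : ExpChar (Polynomial Fq) (ringChar Fq) := ExpChar.prime hp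
  rw [hcard, ← pow_mul]
  exact add_pow_char_pow (p := ringChar Fq) (n := ↑n * m) a b

lemma st4.vanish (m k : ℕ) (hk : k < m) (e : Polynomial Fq) (x : Fin m → Polynomial Fq) :
    ∑ c : Fin m → Fq, (e + ∑ j, Polynomial.C (c j) * x j) ^ (q ^ k - 1) = 0 := by
  classical
  have hq2 : 1 < q := Fintype.one_lt_card
  -- step 1: turn the power into a product of (q-1)-th powers of q^j-th powers
  have step1 : ∀ c : Fin m → Fq, (e + ∑ j, C (c j) * x j) ^ (q ^ k - 1)
      = ∏ j : Fin k, (e ^ q ^ (j:ℕ) + ∑ l, C (c l) * x l ^ q ^ (j:ℕ)) ^ (q - 1) := by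
    intro c
    rw [← st4.geom k, ← Finset.prod_pow_eq_pow_sum, ← Fin.prod_univ_eq_prod_range]
    refine Finset.prod_congr rfl fun j _ => ?_
    rw [mul_comm (q-1), pow_mul, st4.add_pow_q, st4.sum_pow_q]
    congr 1
    · congr 1
      refine Finset.sum_congr rfl fun l _ => ?_
      rw [mul_pow, ← map_pow, FiniteField.pow_card_pow]
  simp_rw [step1]
  -- step 2: expand each (q-1)-th power as a sum over words
  set g : Fin k → Option (Fin m) → (Fin m → Fq) → Polynomial Fq :=
    fun j o c => match o with
      | none => e ^ q ^ (j:ℕ)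
      | some l => C (c l) * x l ^ q ^ (j:ℕ) with hg
  have step2 : ∀ (c : Fin m → Fq) (j : Fin k),
      (e ^ q ^ (j:ℕ) + ∑ l, C (c l) * x l ^ q ^ (j:ℕ)) ^ (q - 1)
      = ∑ w : Fin (q-1) → Option (Fin m), ∏ r, g j (w r) c := by
    intro c j
    have : e ^ q ^ (j:ℕ) + ∑ l, C (c l) * x l ^ q ^ (j:ℕ) = ∑ o : Option (Fin m), g j o c := by
      rw [Fintype.sum_option]
    rw [this, Finset.sum_pow' univ (fun o => g j o c) (q-1)]
    rw [Fintype.piFinset_univ]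
  simp_rw [step2]
  have step3 : ∀ c : Fin m → Fq,
      (∏ j : Fin k, ∑ w : Fin (q-1) → Option (Fin m), ∏ r, g j (w r) c)
      = ∑ W : Fin k → Fin (q-1) → Option (Fin m), ∏ j, ∏ r, g j (W j r) c := by
    intro c
    rw [Finset.prod_univ_sum]
    rw [Fintype.piFinset_univ]
  simp_rw [step3]
  rw [Finset.sum_comm]
  refine Finset.sum_eq_zero fun W _ => ?_
  -- now fixed W; count fibers
  set N : Fin m → ℕ := fun l => #{pr : Fin k × Fin (q-1) | W pr.1 pr.2 = some l} with hN
  set u : Fin k → Fin (q-1) → Polynomial Fq := fun j r =>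
    match W j r with
    | none => e ^ q ^ (j:ℕ)
    | some l => x l ^ q ^ (j:ℕ) with hu
  set h : (Fin m → Fq) → Option (Fin m) → Polynomial Fq :=
    fun c o => o.elim 1 (fun l => C (c l)) with hh
  have split : ∀ c : Fin m → Fq, (∏ j, ∏ r, g j (W j r) c)
      = (∏ j, ∏ r, u j r) * ∏ l, C (c l) ^ N l := by
    intro c
    have h1 : ∀ j r, g j (W j r) c = u j r * h c (W j r) := by
      intro j r
      cases hw : W j r with
      | none => simp [hg, hu, hh, hw]
      | some l => simp [hg, hu, hh, hw, mul_comm]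
    simp_rw [h1, Finset.prod_mul_distrib]
    congr 1
    have h2 : (∏ j, ∏ r, h c (W j r)) = ∏ pr : Fin k × Fin (q-1), h c (W pr.1 pr.2) := by
      rw [Fintype.prod_prod_type]
    rw [h2, Finset.prod_comp (h c) (fun pr : Fin k × Fin (q-1) => W pr.1 pr.2)]
    have h3 : (∏ o ∈ Finset.image (fun pr : Fin k × Fin (q-1) => W pr.1 pr.2) univ,
        h c o ^ #(univ.filter fun pr : Fin k × Fin (q-1) => W pr.1 pr.2 = o))
        = ∏ o : Option (Fin m), h c o ^ #(univ.filter fun pr : Fin k × Fin (q-1) => W pr.1 pr.2 = o) := by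
      refine Finset.prod_subset (Finset.subset_univ _) fun o _ ho => ?_
      have : #(univ.filter fun pr : Fin k × Fin (q-1) => W pr.1 pr.2 = o) = 0 := by
        rw [Finset.card_eq_zero, Finset.filter_eq_empty_iff]
        intro pr _
        exact fun hE => ho (Finset.mem_image.mpr ⟨pr, Finset.mem_univ _, hE⟩)
      rw [this, pow_zero]
    rw [h3, Fintype.prod_option]
    simp only [hh, Option.elim, one_pow, one_mul]
    rfl
  simp_rw [split, ← Finset.mul_sum]
  -- pigeonhole: some N l < q - 1
  have hcount : ∑ l, N l ≤ k * (q - 1) := by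
    have hfib : (Finset.univ : Finset (Fin k × Fin (q-1))).card
        = ∑ o : Option (Fin m), #(univ.filter fun pr : Fin k × Fin (q-1) => W pr.1 pr.2 = o) :=
      Finset.card_eq_sum_card_fiberwise (fun pr _ => Finset.mem_univ _)
    rw [Fintype.sum_option] at hfib
    have : ∑ l, N l ≤ (Finset.univ : Finset (Fin k × Fin (q-1))).card := by
      rw [hfib]; exact Nat.le_add_left _ _
    simpa [Finset.card_univ] using this
  have hex : ∃ l, N l < q - 1 := by
    by_contra hcon
    push_neg at hcon
    have : m * (q-1) ≤ ∑ l, N l := by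
      calc m * (q-1) = ∑ _l : Fin m, (q-1) := by simp [Finset.sum_const, Finset.card_univ, mul_comm]
      _ ≤ ∑ l, N l := Finset.sum_le_sum fun l _ => hcon l
    have hmk : m * (q-1) ≤ k * (q-1) := le_trans this hcount
    have : m ≤ k := Nat.le_of_mul_le_mul_right hmk (by omega)
    omega
  obtain ⟨l0, hl0⟩ := hex
  have hzero : ∑ c : Fin m → Fq, ∏ l, C (c l) ^ N l = 0 := by
    have h4 : ∑ c ∈ (Fintype.piFinset fun _ : Fin m => (univ : Finset Fq)),
        ∏ l, C (c l) ^ N l = ∏ l : Fin m, ∑ y : Fq, C y ^ N l :=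
      (Finset.prod_univ_sum (fun _ : Fin m => (univ : Finset Fq))
        (fun l y => C y ^ N l)).symm
    rw [Fintype.piFinset_univ] at h4
    rw [h4]
    refine Finset.prod_eq_zero (Finset.mem_univ l0) ?_
    have h5 : ∑ y : Fq, C y ^ N l0 = C (∑ y : Fq, y ^ N l0) := by
      simp_rw [← map_pow]
      rw [map_sum]
    rw [h5, FiniteField.sum_pow_lt_card_sub_one Fq (N l0) hl0, map_zero]
  rw [hzero, mul_zero]

lemma st4.tuple_split (m : ℕ) (f : Polynomial Fq → Polynomial Fq) (h0 : f 0 = 0)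
    (hhom : ∀ (l : Fq), l ≠ 0 → ∀ a, f (Polynomial.C l * a) = f a) :
    ∑ c : Fin m → Fq, f (∑ j, Polynomial.C (c j) * Polynomial.X ^ (j:ℕ))
      = - ∑ d ∈ Finset.range m, ∑ c : Fin d → Fq, f (monicOf Fq d c) := by
  induction m with
  | zero =>
    simp [h0]
  | succ m ih =>
    classical
    have hsplit : ∑ c : Fin (m+1) → Fq, f (∑ j, Polynomial.C (c j) * Polynomial.X ^ (j:ℕ))
        = ∑ p : Fq × (Fin m → Fq),
            f ((∑ j : Fin m, Polynomial.C (p.2 j) * Polynomial.X ^ (j:ℕ))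
               + Polynomial.C p.1 * Polynomial.X ^ m) := by
      rw [← (Fin.snocEquiv (fun _ => Fq)).sum_comp
        (fun c => f (∑ j, Polynomial.C (c j) * Polynomial.X ^ (j:ℕ)))]
      refine Finset.sum_congr rfl fun p _ => ?_
      congr 1
      rw [Fin.sum_univ_castSucc]
      simp [Fin.snocEquiv, Fin.snoc_castSucc, Fin.snoc_last]
    rw [hsplit, Fintype.sum_prod_type]
    rw [← Finset.sum_erase_add _ _ (Finset.mem_univ (0:Fq))]
    have hzero : ∑ c : Fin m → Fq,
        f ((∑ j : Fin m, Polynomial.C (c j) * Polynomial.X ^ (j:ℕ))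
           + Polynomial.C (0:Fq) * Polynomial.X ^ m)
        = - ∑ d ∈ Finset.range m, ∑ c : Fin d → Fq, f (monicOf Fq d c) := by
      simp only [map_zero, zero_mul, add_zero]
      exact ih
    rw [hzero]
    have hx : ∀ l : Fq, l ≠ 0 → (∑ c : Fin m → Fq,
        f ((∑ j : Fin m, Polynomial.C (c j) * Polynomial.X ^ (j:ℕ))
           + Polynomial.C l * Polynomial.X ^ m))
        = ∑ c : Fin m → Fq, f (monicOf Fq m c) := by
      intro l hl
      refine (Fintype.sum_equiv (Equiv.piCongrRight fun _ : Fin m => Equiv.mulLeft₀ l hl)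
        (fun c => f (monicOf Fq m c))
        (fun c => f ((∑ j : Fin m, Polynomial.C (c j) * Polynomial.X ^ (j:ℕ))
           + Polynomial.C l * Polynomial.X ^ m)) (fun c => ?_)).symm
      have hb : (∑ j : Fin m, Polynomial.C (l * c j) * Polynomial.X ^ (j:ℕ))
          + Polynomial.C l * Polynomial.X ^ m = Polynomial.C l * monicOf Fq m c := by
        rw [monicOf, mul_add, Finset.mul_sum]
        rw [add_comm]
        congr 1
        refine Finset.sum_congr rfl fun j _ => ?_
        rw [map_mul]; ring
      show f (monicOf Fq m c)
          = f ((∑ j : Fin m, Polynomial.C (l * c j) * Polynomial.X ^ (j:ℕ))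
              + Polynomial.C l * Polynomial.X ^ m)
      rw [hb, hhom l hl]
    have hrw : ∑ x ∈ (Finset.univ : Finset Fq).erase 0, ∑ c : Fin m → Fq,
        f ((∑ j : Fin m, Polynomial.C (c j) * Polynomial.X ^ (j:ℕ))
           + Polynomial.C x * Polynomial.X ^ m)
        = (q - 1) • ∑ c : Fin m → Fq, f (monicOf Fq m c) := by
      rw [Finset.sum_congr rfl (fun x hx' => hx x (Finset.ne_of_mem_erase hx'))]
      rw [Finset.sum_const, Finset.card_erase_of_mem (Finset.mem_univ _), Finset.card_univ]
    rw [hrw]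
    have hq0 : ((q : ℕ) : Polynomial Fq) = 0 := by
      rw [← map_natCast (algebraMap Fq (Polynomial Fq)) (q : ℕ), Nat.cast_card_eq_zero, map_zero]
    have hminus : ((q - 1 : ℕ) : Polynomial Fq) = -1 := by
      rw [Nat.cast_sub Fintype.card_pos, hq0]
      simp
    rw [Finset.sum_range_succ, nsmul_eq_mul, hminus]
    ring

lemma st4.monic_vanish (d k : ℕ) (hk : k < d) :
    ∑ c : Fin d → Fq, (monicOf Fq d c) ^ (q ^ k - 1) = 0 := by
  have h := st4.vanish (Fq := Fq) d k hk (Polynomial.X ^ d) (fun j => Polynomial.X ^ (j:ℕ))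
  simpa [monicOf] using h

lemma st4.monic_sum_zero (k : ℕ) (hk : 1 ≤ k) :
    ∑ d ∈ Finset.range (k+1), ∑ c : Fin d → Fq, (monicOf Fq d c) ^ (q ^ k - 1) = 0 := by
  have hq2 : 1 < q := Fintype.one_lt_card
  have hqk : 1 ≤ q ^ k := Nat.one_le_pow _ _ (by omega)
  have hqk2 : 2 ≤ q ^ k := le_trans hq2 (Nat.le_self_pow (by omega) _)
  have hvan := st4.vanish (k+1) k (Nat.lt_succ_self k) (0 : Polynomial Fq)
    (fun j => Polynomial.X ^ (j:ℕ))
  simp only [zero_add] at hvan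
  have hts := st4.tuple_split (Fq := Fq) (k+1) (fun a => a ^ (q ^ k - 1))
    (by show (0:Polynomial Fq) ^ (q ^ k - 1) = 0; rw [zero_pow (by omega)]) ?_
  · rw [hvan] at hts
    rw [← neg_eq_zero]
    exact hts.symm ▸ rfl
  · intro l hl a
    have h1 : l ^ (q ^ k) = l := FiniteField.pow_card_pow k l
    have h2 : l ^ (q ^ k - 1) * l = 1 * l := by
      rw [← pow_succ, Nat.sub_add_cancel hqk, h1, one_mul]
    have h3 : l ^ (q ^ k - 1) = 1 := mul_right_cancel₀ hl h2
    show (Polynomial.C l * a) ^ (q ^ k - 1) = a ^ (q ^ k - 1)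
    rw [mul_pow, ← map_pow, h3, map_one, one_mul]

lemma st4.monic (d : ℕ) (c : Fin d → Fq) : (monicOf Fq d c).Monic := by
  apply Polynomial.monic_X_pow_add
  apply lt_of_le_of_lt (Polynomial.degree_sum_le _ _)
  rw [Finset.sup_lt_iff (by exact WithBot.bot_lt_coe d)]
  intro j _
  exact lt_of_le_of_lt (Polynomial.degree_C_mul_X_pow_le _ _)
    (by exact_mod_cast j.isLt)

lemma st4.degree_le (d : ℕ) (c : Fin d → Fq) : (monicOf Fq d c).degree ≤ (d:ℕ) := by
  rw [monicOf]
  apply le_trans (Polynomial.degree_add_le _ _)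
  rw [max_le_iff]
  constructor
  · simpa using Polynomial.degree_X_pow_le (R := Fq) d
  · apply le_trans (Polynomial.degree_sum_le _ _)
    rw [Finset.sup_le_iff]
    intro j _
    exact le_trans (Polynomial.degree_C_mul_X_pow_le _ _) (by exact_mod_cast le_of_lt j.isLt)

lemma st4.eval_map (a : Polynomial Fq) (k : ℕ) :
    Polynomial.eval ((algebraMap (Polynomial Fq) (RatFunc Fq) Polynomial.X) ^ q ^ k)
      (a.map (algebraMap Fq (RatFunc Fq)))
    = (algebraMap (Polynomial Fq) (RatFunc Fq) a) ^ q ^ k := by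
  obtain ⟨n, hp, hcard⟩ := FiniteField.card Fq (ringChar Fq)
  haveI : Fact (Nat.Prime (ringChar Fq)) := ⟨hp⟩
  haveI : CharP (RatFunc Fq) (ringChar Fq) :=
    charP_of_injective_ringHom (algebraMap Fq (RatFunc Fq)).injective _
  haveI : ExpChar (RatFunc Fq) (ringChar Fq) := ExpChar.prime hp
  induction a using Polynomial.induction_on' with
  | add p r hp' hr' =>
    rw [Polynomial.map_add, Polynomial.eval_add, hp', hr', map_add]
    rw [hcard, ← pow_mul]
    exact (add_pow_char_pow (R := RatFunc Fq) (p := ringChar Fq) (n := ↑n * k) _ _).symm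
  | monomial m c =>
    rw [Polynomial.map_monomial, Polynomial.eval_monomial]
    rw [← Polynomial.C_mul_X_pow_eq_monomial, map_mul, map_pow, mul_pow]
    have h1 : (algebraMap (Polynomial Fq) (RatFunc Fq)) (Polynomial.C c)
        = algebraMap Fq (RatFunc Fq) c := by
      rw [← Polynomial.algebraMap_eq, ← IsScalarTower.algebraMap_apply]
    rw [h1, ← map_pow (algebraMap Fq (RatFunc Fq)), FiniteField.pow_card_pow,
      ← pow_mul, ← pow_mul, mul_comm m (q ^ k)]

end

/-- the key identity `𝒮_i^{(1)} = 𝒮_{≤i} · S_i(q-1)`; explicitly,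
`Σ_{a ∈ A_{+,i}} a(t)·a^{-q} = (Σ_{d=0}^{i} Σ_{a ∈ A_{+,d}} a(t)·a⁻¹) · (Σ_{b ∈ A_{+,i}} b^{-(q-1)})`
in `K[t]`. -/

theorem statement4 (Fq : Type) [Field Fq] [Fintype Fq] (i : ℕ) :
    (∑ c : Fin i → Fq,
        Polynomial.C ((algebraMap (Polynomial Fq) (RatFunc Fq) (monicOf Fq i c))⁻¹ ^
            Fintype.card Fq) *
          (monicOf Fq i c).map (algebraMap Fq (RatFunc Fq))) =
      (∑ d ∈ Finset.range (i + 1), scriptS Fq d) *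
        Polynomial.C (powerSum Fq i (Fintype.card Fq - 1)) := by
  classical
  have hq2 : 1 < Fintype.card Fq := Fintype.one_lt_card
  have hinj : Function.Injective (algebraMap (Polynomial Fq) (RatFunc Fq)) := IsFractionRing.injective (Polynomial Fq) (RatFunc Fq)
  have hne : ∀ d (c : Fin d → Fq), algebraMap (Polynomial Fq) (RatFunc Fq) (monicOf Fq d c) ≠ 0 := by
    intro d c h
    exact (st4.monic d c).ne_zero (hinj (h.trans (map_zero (algebraMap (Polynomial Fq) (RatFunc Fq))).symm))
  -- the evaluation points
  apply Polynomial.eq_of_degrees_lt_of_eval_index_eq (v := fun k : ℕ => algebraMap (Polynomial Fq) (RatFunc Fq) Polynomial.X ^ Fintype.card Fq ^ k)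
    (Finset.range (i+1))
  -- injectivity
  · intro a ha b hb hab
    simp only [← map_pow] at hab
    have := hinj hab
    have h2 : Fintype.card Fq ^ a = Fintype.card Fq ^ b := by
      have := congrArg Polynomial.natDegree this
      simpa [Polynomial.natDegree_X_pow] using this
    exact Nat.pow_right_injective hq2 h2
  -- degree bound LHS
  · rw [Finset.card_range]
    apply lt_of_le_of_lt (Polynomial.degree_sum_le _ _)
    rw [Finset.sup_lt_iff (by exact_mod_cast WithBot.bot_lt_coe (i+1))]
    intro c _
    apply lt_of_le_of_lt (Polynomial.degree_mul_le _ _)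
    have h1 : (Polynomial.C ((algebraMap (Polynomial Fq) (RatFunc Fq) (monicOf Fq i c))⁻¹ ^ Fintype.card Fq)).degree ≤ 0 := Polynomial.degree_C_le
    have h2 : ((monicOf Fq i c).map (algebraMap Fq (RatFunc Fq))).degree ≤ (i:ℕ) :=
      le_trans (Polynomial.degree_map_le) (st4.degree_le i c)
    calc (Polynomial.C ((algebraMap (Polynomial Fq) (RatFunc Fq) (monicOf Fq i c))⁻¹ ^ Fintype.card Fq)).degree
        + ((monicOf Fq i c).map (algebraMap Fq (RatFunc Fq))).degree
        ≤ 0 + (i:ℕ) := add_le_add h1 h2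
      _ = (i:ℕ) := zero_add _
      _ < ((i+1:ℕ) : WithBot ℕ) := by exact_mod_cast Nat.lt_succ_self i
  -- degree bound RHS
  · rw [Finset.card_range]
    apply lt_of_le_of_lt (Polynomial.degree_mul_le _ _)
    have h1 : (∑ d ∈ Finset.range (i+1), scriptS Fq d).degree ≤ (i:ℕ) := by
      apply le_trans (Polynomial.degree_sum_le _ _)
      rw [Finset.sup_le_iff]
      intro d hd
      rw [scriptS]
      apply le_trans (Polynomial.degree_sum_le _ _)
      rw [Finset.sup_le_iff]
      intro c _
      apply le_trans (Polynomial.degree_mul_le _ _)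
      calc (Polynomial.C ((algebraMap (Polynomial Fq) (RatFunc Fq) (monicOf Fq d c))⁻¹)).degree
          + ((monicOf Fq d c).map (algebraMap Fq (RatFunc Fq))).degree
          ≤ 0 + (d:ℕ) := add_le_add Polynomial.degree_C_le
            (le_trans (Polynomial.degree_map_le) (st4.degree_le d c))
        _ = (d:ℕ) := zero_add _
        _ ≤ (i:ℕ) := by
            have : d ≤ i := by
              have := Finset.mem_range.mp hd; omega
            exact_mod_cast this
    calc (∑ d ∈ Finset.range (i+1), scriptS Fq d).degree
        + (Polynomial.C (powerSum Fq i (Fintype.card Fq - 1))).degree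
        ≤ (i:ℕ) + 0 := add_le_add h1 Polynomial.degree_C_le
      _ = (i:ℕ) := add_zero _
      _ < ((i+1:ℕ) : WithBot ℕ) := by exact_mod_cast Nat.lt_succ_self i
  -- evaluations
  · intro k hk
    rw [Finset.mem_range] at hk
    -- evaluate both sides
    rw [Polynomial.eval_finset_sum, Polynomial.eval_mul, Polynomial.eval_C,
      Polynomial.eval_finset_sum]
    simp only [Polynomial.eval_mul, Polynomial.eval_C, st4.eval_map]
    -- now: Σ_c (α⁻¹)^Fintype.card Fq * α^{Fintype.card Fq^k} = (Σ_d eval (scriptS d)) * powerSum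
    have hscript : ∀ d : ℕ, Polynomial.eval (algebraMap (Polynomial Fq) (RatFunc Fq) Polynomial.X ^ Fintype.card Fq ^ k)
        (scriptS Fq d) = ∑ c : Fin d → Fq, (algebraMap (Polynomial Fq) (RatFunc Fq) (monicOf Fq d c))⁻¹ * (algebraMap (Polynomial Fq) (RatFunc Fq) (monicOf Fq d c)) ^ Fintype.card Fq ^ k := by
      intro d
      rw [scriptS, Polynomial.eval_finset_sum]
      simp only [Polynomial.eval_mul, Polynomial.eval_C, st4.eval_map]
    simp only [hscript]
    rcases Nat.eq_zero_or_pos k with hk0 | hkpos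
    · -- k = 0
      subst hk0
      simp only [pow_zero, pow_one]
      have hL : ∀ c : Fin i → Fq, (algebraMap (Polynomial Fq) (RatFunc Fq) (monicOf Fq i c))⁻¹ ^ Fintype.card Fq * (algebraMap (Polynomial Fq) (RatFunc Fq) (monicOf Fq i c))
          = (algebraMap (Polynomial Fq) (RatFunc Fq) (monicOf Fq i c))⁻¹ ^ (Fintype.card Fq - 1) := by
        intro c
        have h9 : ((algebraMap (Polynomial Fq) (RatFunc Fq)) (monicOf Fq i c))⁻¹ ^ Fintype.card Fq
            = ((algebraMap (Polynomial Fq) (RatFunc Fq)) (monicOf Fq i c))⁻¹ ^ (Fintype.card Fq - 1)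
              * ((algebraMap (Polynomial Fq) (RatFunc Fq)) (monicOf Fq i c))⁻¹ := by
          rw [← pow_succ]
          congr 1
          omega
        rw [h9, mul_assoc, inv_mul_cancel₀ (hne i c), mul_one]
      have hR : ∀ d : ℕ, (∑ c : Fin d → Fq,
          (algebraMap (Polynomial Fq) (RatFunc Fq) (monicOf Fq d c))⁻¹ * (algebraMap (Polynomial Fq) (RatFunc Fq) (monicOf Fq d c)) ^ 1) = ((Fintype.card Fq ^ d : ℕ) : RatFunc Fq) := by
        intro d
        rw [Finset.sum_congr rfl (fun c _ => by
          rw [pow_one, inv_mul_cancel₀ (hne d c)])]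
        rw [Finset.sum_const, Finset.card_univ, Fintype.card_fun, Fintype.card_fin, nsmul_eq_mul, mul_one]
      simp only [pow_one] at hR ⊢
      rw [Finset.sum_congr rfl (fun c _ => hL c)]
      rw [Finset.sum_congr rfl (fun d _ => hR d)]
      have hcast : ((Fintype.card Fq : ℕ) : RatFunc Fq) = 0 := by
        rw [← map_natCast (algebraMap Fq (RatFunc Fq)) (Fintype.card Fq), Nat.cast_card_eq_zero, map_zero]
      have : ∑ d ∈ Finset.range (i+1), ((Fintype.card Fq ^ d : ℕ) : RatFunc Fq) = 1 := by
        simp only [Nat.cast_pow, hcast]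
        rw [Finset.sum_eq_single 0]
        · simp
        · intro d _ hd0; exact zero_pow hd0
        · intro h; exact absurd (Finset.mem_range.mpr (by omega)) h
      rw [this, one_mul, powerSum]
    · -- k ≥ 1
      have hqle : Fintype.card Fq ≤ Fintype.card Fq ^ k := Nat.le_self_pow (by omega) (Fintype.card Fq)
      have hL : ∀ c : Fin i → Fq, (algebraMap (Polynomial Fq) (RatFunc Fq) (monicOf Fq i c))⁻¹ ^ Fintype.card Fq * (algebraMap (Polynomial Fq) (RatFunc Fq) (monicOf Fq i c)) ^ Fintype.card Fq ^ k
          = algebraMap (Polynomial Fq) (RatFunc Fq) ((monicOf Fq i c) ^ (Fintype.card Fq ^ k - Fintype.card Fq)) := by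
        intro c
        rw [map_pow]
        have h1 : (algebraMap (Polynomial Fq) (RatFunc Fq) (monicOf Fq i c)) ^ (Fintype.card Fq ^ k)
            = (algebraMap (Polynomial Fq) (RatFunc Fq) (monicOf Fq i c)) ^ (Fintype.card Fq ^ k - Fintype.card Fq) * (algebraMap (Polynomial Fq) (RatFunc Fq) (monicOf Fq i c)) ^ Fintype.card Fq := by
          rw [← pow_add, Nat.sub_add_cancel hqle]
        rw [h1, ← mul_assoc, mul_comm ((algebraMap (Polynomial Fq) (RatFunc Fq) (monicOf Fq i c))⁻¹ ^ Fintype.card Fq), mul_assoc,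
          ← mul_pow, inv_mul_cancel₀ (hne i c), one_pow, mul_one]
      rw [Finset.sum_congr rfl (fun c _ => hL c), ← map_sum]
      have hexp : ∀ c : Fin i → Fq, (monicOf Fq i c) ^ (Fintype.card Fq ^ k - Fintype.card Fq)
          = ((monicOf Fq i c) ^ (Fintype.card Fq ^ (k-1) - 1)) ^ Fintype.card Fq ^ 1 := by
        intro c
        rw [← pow_mul]
        congr 1
        have : Fintype.card Fq ^ (k-1) * Fintype.card Fq = Fintype.card Fq ^ k := by
          rw [← pow_succ]
          congr 1
          omega
        rw [pow_one, Nat.sub_mul, one_mul, this]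
      rw [Finset.sum_congr rfl (fun c _ => hexp c), ← st4.sum_pow_q,
        st4.monic_vanish i (k-1) (by omega), zero_pow (pow_ne_zero 1 (by omega)), map_zero]
      -- RHS is zero as well
      have hRd : ∀ d : ℕ, (∑ c : Fin d → Fq,
          (algebraMap (Polynomial Fq) (RatFunc Fq) (monicOf Fq d c))⁻¹ * (algebraMap (Polynomial Fq) (RatFunc Fq) (monicOf Fq d c)) ^ Fintype.card Fq ^ k)
          = algebraMap (Polynomial Fq) (RatFunc Fq) (∑ c : Fin d → Fq, (monicOf Fq d c) ^ (Fintype.card Fq ^ k - 1)) := by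
        intro d
        rw [map_sum]
        refine Finset.sum_congr rfl fun c _ => ?_
        rw [map_pow]
        have h1 : (algebraMap (Polynomial Fq) (RatFunc Fq) (monicOf Fq d c)) ^ (Fintype.card Fq ^ k)
            = (algebraMap (Polynomial Fq) (RatFunc Fq) (monicOf Fq d c)) ^ (Fintype.card Fq ^ k - 1) * (algebraMap (Polynomial Fq) (RatFunc Fq) (monicOf Fq d c)) ^ 1 := by
          rw [← pow_add, Nat.sub_add_cancel (Nat.one_le_pow _ _ (by omega))]
        rw [h1, pow_one, ← mul_assoc, mul_comm ((algebraMap (Polynomial Fq) (RatFunc Fq) (monicOf Fq d c))⁻¹), mul_assoc,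
          inv_mul_cancel₀ (hne d c), mul_one]
      rw [Finset.sum_congr rfl (fun d _ => hRd d), ← map_sum]
      have hzero : ∑ d ∈ Finset.range (i+1), ∑ c : Fin d → Fq,
          (monicOf Fq d c) ^ (Fintype.card Fq ^ k - 1) = 0 := by
        rw [Finset.range_eq_Ico,
          ← Finset.sum_Ico_consecutive _ (by omega : 0 ≤ k+1) (by omega : k+1 ≤ i+1)]
        rw [← Finset.range_eq_Ico]
        rw [st4.monic_sum_zero k hkpos, zero_add]
        refine Finset.sum_eq_zero fun d hd => ?_
        exact st4.monic_vanish d k (Finset.mem_Ico.mp hd).1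
      rw [hzero, map_zero, zero_mul]
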